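/- Let μ, ξ > 0 and define Λᶜ(q) by formula (Λc): Λᶜ(q) = [ξ√(q²+ξ/(2μ)) / (D(q)(√(q²+1)+1+√(q²+ξ/(2μ))))]·(q² − 2√(q²+1) − 2 + 2q⁴/((√(q²+1)+1+√(q²+ξ/μ))(√(q²+ξ/(2μ))+√(q²+ξ/μ)))) + [ξ√(q²+ξ/(2μ))/D(q)]·(ξ/(4μ+√(2μξ)) + 2 − q²/(√(q²+ξ/(2μ))+√(q²+ξ/μ))), with D(q) = 4μ²q²√(q²+ξ/(2μ))√(q²+ξ/μ) − (2μq²+ξ)². Then Λᶜ(q) → −1/(4μ) as |q| → ∞. -/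

import Mathlib

noncomputable def Ddet (μ ξ q : ℝ) : ℝ :=
  4 * μ ^ 2 * q ^ 2 * Real.sqrt (q ^ 2 + ξ / (2 * μ)) * Real.sqrt (q ^ 2 + ξ / μ)
    - (2 * μ * q ^ 2 + ξ) ^ 2

noncomputable def Λc (μ ξ q : ℝ) : ℝ :=
  ξ * Real.sqrt (q ^ 2 + ξ / (2 * μ)) /
    (Ddet μ ξ q * (Real.sqrt (q ^ 2 + 1) + 1 + Real.sqrt (q ^ 2 + ξ / (2 * μ)))) *
    (q ^ 2 - 2 * Real.sqrt (q ^ 2 + 1) - 2 +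
      2 * q ^ 4 /
        ((Real.sqrt (q ^ 2 + 1) + 1 + Real.sqrt (q ^ 2 + ξ / μ)) *
          (Real.sqrt (q ^ 2 + ξ / (2 * μ)) + Real.sqrt (q ^ 2 + ξ / μ))))
  + ξ * Real.sqrt (q ^ 2 + ξ / (2 * μ)) / Ddet μ ξ q *
    (ξ / (4 * μ + Real.sqrt (2 * μ * ξ)) + 2 -
      q ^ 2 / (Real.sqrt (q ^ 2 + ξ / (2 * μ)) + Real.sqrt (q ^ 2 + ξ / μ)))


-- sqrt shift lemma
lemma sqrt_shift (t c : ℝ) (ht : 0 < t) (hc : 0 ≤ c) :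
    Real.sqrt (1 / t ^ 2 + c) = Real.sqrt (1 + c * t ^ 2) / t := by
  have h1 : (1:ℝ) / t ^ 2 + c = (Real.sqrt (1 + c * t ^ 2) / t) ^ 2 := by
    rw [div_pow, Real.sq_sqrt (by positivity)]
    field_simp
  rw [h1, Real.sqrt_sq (by positivity)]

noncomputable def Gfun (μ ξ t : ℝ) : ℝ :=
  ξ * Real.sqrt (1 + ξ / (2 * μ) * t ^ 2) *
      (4 * μ ^ 2 * Real.sqrt (1 + ξ / (2 * μ) * t ^ 2) * Real.sqrt (1 + ξ / μ * t ^ 2)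
        + (2 * μ + ξ * t ^ 2) ^ 2) /
    ((-(8 * μ ^ 3 * ξ) - 16 * μ ^ 2 * ξ ^ 2 * t ^ 2 - 8 * μ * ξ ^ 3 * t ^ 4 - ξ ^ 4 * t ^ 6) *
      (Real.sqrt (1 + t ^ 2) + t + Real.sqrt (1 + ξ / (2 * μ) * t ^ 2))) *
    (1 - 2 * t * Real.sqrt (1 + t ^ 2) - 2 * t ^ 2 +
      2 / ((Real.sqrt (1 + t ^ 2) + t + Real.sqrt (1 + ξ / μ * t ^ 2)) *
        (Real.sqrt (1 + ξ / (2 * μ) * t ^ 2) + Real.sqrt (1 + ξ / μ * t ^ 2))))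
  + ξ * Real.sqrt (1 + ξ / (2 * μ) * t ^ 2) *
      (4 * μ ^ 2 * Real.sqrt (1 + ξ / (2 * μ) * t ^ 2) * Real.sqrt (1 + ξ / μ * t ^ 2)
        + (2 * μ + ξ * t ^ 2) ^ 2) /
    (-(8 * μ ^ 3 * ξ) - 16 * μ ^ 2 * ξ ^ 2 * t ^ 2 - 8 * μ * ξ ^ 3 * t ^ 4 - ξ ^ 4 * t ^ 6) *
    (t * (ξ / (4 * μ + Real.sqrt (2 * μ * ξ)) + 2) -
      1 / (Real.sqrt (1 + ξ / (2 * μ) * t ^ 2) + Real.sqrt (1 + ξ / μ * t ^ 2)))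

lemma Gzero (μ ξ : ℝ) (hμ : 0 < μ) (hξ : 0 < ξ) : Gfun μ ξ 0 = -1 / (4 * μ) := by
  have h1 : Real.sqrt 1 = 1 := Real.sqrt_one
  simp only [Gfun]
  norm_num [h1]
  field_simp
  ring

lemma Gcont (μ ξ : ℝ) (hμ : 0 < μ) (hξ : 0 < ξ) : ContinuousAt (Gfun μ ξ) 0 := by
  have hsq : ∀ c : ℝ, ContinuousAt (fun t : ℝ => Real.sqrt (1 + c * t ^ 2)) 0 := by
    intro c
    exact Real.continuous_sqrt.continuousAt.comp (by fun_prop)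
  have h1 : Real.sqrt 1 = 1 := Real.sqrt_one
  unfold Gfun
  apply ContinuousAt.add
  · apply ContinuousAt.mul
    · apply ContinuousAt.div
      · exact (continuousAt_const.mul (hsq _)).mul
          ((continuousAt_const.mul (hsq _)).mul (hsq _) |>.add (by fun_prop))
      · exact (by fun_prop : ContinuousAt (fun t : ℝ => -(8 * μ ^ 3 * ξ) - 16 * μ ^ 2 * ξ ^ 2 * t ^ 2 - 8 * μ * ξ ^ 3 * t ^ 4 - ξ ^ 4 * t ^ 6) 0).mul
          (((hsq 1).congr (by filter_upwards with t; rw [one_mul]) |>.add continuousAt_id).add (hsq _))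
      · norm_num [h1]
        exact ⟨hμ.ne', hξ.ne'⟩
    · apply ContinuousAt.add
      · fun_prop
      · apply ContinuousAt.div continuousAt_const
        · exact (((hsq 1).congr (by filter_upwards with t; rw [one_mul]) |>.add continuousAt_id).add (hsq _)).mul ((hsq _).add (hsq _))
        · norm_num [h1]
  · apply ContinuousAt.mul
    · apply ContinuousAt.div
      · exact (continuousAt_const.mul (hsq _)).mul
          ((continuousAt_const.mul (hsq _)).mul (hsq _) |>.add (by fun_prop))
      · fun_prop
      · norm_num
        exact ⟨hμ.ne', hξ.ne'⟩
    · apply ContinuousAt.sub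
      · fun_prop
      · apply ContinuousAt.div continuousAt_const
        · exact (hsq _).add (hsq _)
        · norm_num [h1]

set_option maxHeartbeats 2000000 in
lemma Λc_eq (μ ξ : ℝ) (hμ : 0 < μ) (hξ : 0 < ξ) (q : ℝ) (hq : q ≠ 0) :
    Λc μ ξ q = Gfun μ ξ (1 / |q|) := by
  set t := 1 / |q| with htdef
  have hq0 : 0 < |q| := abs_pos.mpr hq
  have ht : 0 < t := by positivity
  have ht2 : t ^ 2 = 1 / q ^ 2 := by rw [htdef, div_pow, one_pow, sq_abs]
  have hq2 : q ^ 2 = 1 / t ^ 2 := by rw [ht2, one_div_one_div]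
  have hq4 : q ^ 4 = 1 / t ^ 4 := by
    have : q ^ 4 = (q ^ 2) ^ 2 := by ring
    rw [this, hq2, div_pow, one_pow]; ring_nf
  have hsa := sqrt_shift t (ξ / (2 * μ)) ht (by positivity)
  have hsb := sqrt_shift t (ξ / μ) ht (by positivity)
  have hs1' : Real.sqrt (1 / t ^ 2 + 1) = Real.sqrt (1 + t ^ 2) / t := by
    rw [sqrt_shift t 1 ht zero_le_one, one_mul]
  set A := Real.sqrt (1 + ξ / (2 * μ) * t ^ 2) with hAdef
  set B := Real.sqrt (1 + ξ / μ * t ^ 2) with hBdef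
  set R := Real.sqrt (1 + t ^ 2) with hRdef
  have hA2 : A ^ 2 = 1 + ξ / (2 * μ) * t ^ 2 := Real.sq_sqrt (by positivity)
  have hB2 : B ^ 2 = 1 + ξ / μ * t ^ 2 := Real.sq_sqrt (by positivity)
  have hApos : 0 < A := Real.sqrt_pos.mpr (by positivity)
  have hBpos : 0 < B := Real.sqrt_pos.mpr (by positivity)
  have hRpos : 0 < R := Real.sqrt_pos.mpr (by positivity)
  have hn : (-(8 * μ ^ 3 * ξ) - 16 * μ ^ 2 * ξ ^ 2 * t ^ 2 - 8 * μ * ξ ^ 3 * t ^ 4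
      - ξ ^ 4 * t ^ 6) ≠ 0 := by
    have : 0 < 8 * μ ^ 3 * ξ + 16 * μ ^ 2 * ξ ^ 2 * t ^ 2 + 8 * μ * ξ ^ 3 * t ^ 4
        + ξ ^ 4 * t ^ 6 := by positivity
    intro h; nlinarith
  have hM : 0 < 4 * μ ^ 2 * A * B + (2 * μ + ξ * t ^ 2) ^ 2 := by
    nlinarith [mul_pos hApos hBpos, sq_nonneg (2 * μ + ξ * t ^ 2), sq_nonneg μ, mul_pos hμ hμ]
  have hKey : 16 * μ ^ 4 * A ^ 2 * B ^ 2 = (2 * μ + ξ * t ^ 2) ^ 4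
      + t ^ 2 * (-(8 * μ ^ 3 * ξ) - 16 * μ ^ 2 * ξ ^ 2 * t ^ 2 - 8 * μ * ξ ^ 3 * t ^ 4
        - ξ ^ 4 * t ^ 6) := by
    rw [hA2, hB2]; field_simp; ring
  have hDdet : Ddet μ ξ q = (-(8 * μ ^ 3 * ξ) - 16 * μ ^ 2 * ξ ^ 2 * t ^ 2
      - 8 * μ * ξ ^ 3 * t ^ 4 - ξ ^ 4 * t ^ 6)
      / ((4 * μ ^ 2 * A * B + (2 * μ + ξ * t ^ 2) ^ 2) * t ^ 2) := by
    unfold Ddet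
    rw [hq2, hsa, hsb, eq_div_iff (by positivity)]
    have expand : (4 * μ ^ 2 * (1 / t ^ 2) * (A / t) * (B / t) - (2 * μ * (1 / t ^ 2) + ξ) ^ 2)
        * ((4 * μ ^ 2 * A * B + (2 * μ + ξ * t ^ 2) ^ 2) * t ^ 2)
        = (16 * μ ^ 4 * A ^ 2 * B ^ 2 - (2 * μ + ξ * t ^ 2) ^ 4) / t ^ 2 := by
      field_simp; ring
    rw [expand, hKey]
    field_simp
    ring
  have hRA : R + t + A ≠ 0 := by positivity
  have hRB : R + t + B ≠ 0 := by positivity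
  have hAB : A + B ≠ 0 := by positivity
  have hS : (4 * μ + Real.sqrt (2 * μ * ξ)) ≠ 0 := by positivity
  simp only [Λc, Gfun]
  rw [hDdet, hq4, hq2, hsa, hsb, hs1']
  set nP := -(8 * μ ^ 3 * ξ) - 16 * μ ^ 2 * ξ ^ 2 * t ^ 2 - 8 * μ * ξ ^ 3 * t ^ 4
    - ξ ^ 4 * t ^ 6 with hnPdef
  set MM := 4 * μ ^ 2 * A * B + (2 * μ + ξ * t ^ 2) ^ 2 with hMMdef
  rw [← hAdef, ← hBdef, ← hRdef]
  congr 1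
  · field_simp
  · field_simp

/-- Λᶜ(q) → −1/(4μ) as |q| → ∞. -/
theorem Λc_limit (μ ξ : ℝ) (hμ : 0 < μ) (hξ : 0 < ξ) :
    ∀ ε > (0 : ℝ), ∃ Q : ℝ, ∀ q : ℝ, Q ≤ |q| → |Λc μ ξ q + 1 / (4 * μ)| < ε := by
  intro ε hε
  obtain ⟨δ, hδ, hd⟩ := Metric.continuousAt_iff.mp (Gcont μ ξ hμ hξ) ε hε
  refine ⟨1 / δ + 1, fun q hq => ?_⟩
  have hq0 : 0 < |q| := lt_of_lt_of_le (by positivity) hq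
  have hqne : q ≠ 0 := fun h => by simp [h] at hq0
  have htδ : dist (1 / |q|) 0 < δ := by
    rw [Real.dist_eq, sub_zero, abs_of_pos (by positivity)]
    rw [div_lt_iff₀ hq0]
    have h1 : δ * (1 / δ + 1) = 1 + δ := by field_simp
    nlinarith [mul_le_mul_of_nonneg_left hq hδ.le]
  have := hd htδ
  rw [Real.dist_eq, Gzero μ ξ hμ hξ] at this
  rw [Λc_eq μ ξ hμ hξ q hqne]
  convert this using 2
  ring
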